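/- Every generalized numerical semigroup S ⊆ ℕ₀^d has a corner element (existence follows from finiteness of the gap set). -/
import Mathlib


open scoped BigOperators

/-- A generalized numerical semigroup (GNS): a submonoid of ℕ₀^d with finite complement. -/
def IsGNS {d : ℕ} (S : Set (Fin d → ℕ)) : Prop :=
  0 ∈ S ∧ (∀ x ∈ S, ∀ y ∈ S, x + y ∈ S) ∧ Sᶜ.Finite

/-- `c` is a corner of `S`: (1) any tuple whose i-th coordinate is ≥ c i lies in S;
(2) for each i with c i ≥ 1 there is a tuple with i-th coordinate c i − 1 outside S. -/
def IsCornerOf {d : ℕ} (S : Set (Fin d → ℕ)) (c : Fin d → ℕ) : Prop :=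
  c ∈ S ∧
  (∀ i : Fin d, ∀ x : Fin d → ℕ, c i ≤ x i → x ∈ S) ∧
  (∀ i : Fin d, c i = 0 ∨ ∃ x : Fin d → ℕ, x i + 1 = c i ∧ x ∉ S)

theorem corner_exists {d : ℕ} (S : Set (Fin d → ℕ)) (hS : IsGNS S) :
    ∃ c : Fin d → ℕ, IsCornerOf S c := by
  classical
  obtain ⟨h0, _hadd, hfin⟩ := hS
  set F : Finset (Fin d → ℕ) := hfin.toFinset with hF
  set c : Fin d → ℕ := fun i => F.sup (fun x => x i + 1) with hc
  have h1 : ∀ i : Fin d, ∀ x : Fin d → ℕ, c i ≤ x i → x ∈ S := by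
    intro i x hle
    by_contra hx
    have hxF : x ∈ F := by simp [hF, Set.Finite.mem_toFinset, hx]
    have : x i + 1 ≤ c i := Finset.le_sup (f := fun x => x i + 1) hxF
    omega
  refine ⟨c, ?_, h1, ?_⟩
  · rcases Nat.eq_zero_or_pos d with hd | hd
    · have : c = 0 := funext fun i => absurd i.2 (by omega)
      rw [this]; exact h0
    · exact h1 ⟨0, hd⟩ c le_rfl
  · intro i
    rcases Nat.eq_zero_or_pos (c i) with h | h
    · exact Or.inl h
    · right
      have hne : F.Nonempty := by
        by_contra hne
        rw [Finset.not_nonempty_iff_eq_empty] at hne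
        simp [hc, hne] at h
      obtain ⟨x, hxF, hx⟩ := Finset.exists_mem_eq_sup F hne (fun x => x i + 1)
      exact ⟨x, hx.symm, by simpa [hF, Set.Finite.mem_toFinset] using hxF⟩
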